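/- A numerical semigroup H is almost symmetric and has maximal embedding dimension if and only if H* = M − M is symmetric. -/

import Mathlib

/-- A numerical semigroup, viewed as a set of integers: a set of nonnegative
integers containing 0, closed under addition, with finite complement in ℕ. -/
def IsNumericalSemigroup (S : Set ℤ) : Prop :=
  (∀ x ∈ S, 0 ≤ x) ∧ 0 ∈ S ∧ (∀ a ∈ S, ∀ b ∈ S, a + b ∈ S) ∧
    {z : ℤ | 0 ≤ z ∧ z ∉ S}.Finite

/-- The genus: the number of nonnegative integers not in `S`. -/
noncomputable def genus (S : Set ℤ) : ℕ := {z : ℤ | 0 ≤ z ∧ z ∉ S}.ncard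

/-- The Frobenius number: the largest integer not in `S`. -/
noncomputable def frob (S : Set ℤ) : ℤ := sSup {z : ℤ | z ∉ S}

/-- The set of pseudo-Frobenius numbers. -/
def PF (S : Set ℤ) : Set ℤ := {x : ℤ | x ∉ S ∧ ∀ h ∈ S, h ≠ 0 → x + h ∈ S}

/-- The type: the number of pseudo-Frobenius numbers. -/
noncomputable def typ (S : Set ℤ) : ℕ := (PF S).ncard

/-- The multiplicity: the smallest nonzero element of `S`. -/
noncomputable def mult (S : Set ℤ) : ℤ := sInf {z : ℤ | z ∈ S ∧ z ≠ 0}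

/-- The Apéry set of `S` with respect to `n`. -/
def apery (S : Set ℤ) (n : ℤ) : Set ℤ := {s ∈ S | s - n ∉ S}

/-- The dual `H* = M - M` of the maximal ideal `M = S \ {0}`. -/
def dual (S : Set ℤ) : Set ℤ :=
  {z : ℤ | ∀ m ∈ S, m ≠ 0 → z + m ∈ S ∧ z + m ≠ 0}

/-- Almost symmetric: `2 g(S) = F(S) + t(S)`. -/
def AlmostSymmetric (S : Set ℤ) : Prop := 2 * (genus S : ℤ) = frob S + (typ S : ℤ)

/-- Symmetric: `2 g(S) = F(S) + 1`. -/
def SymmetricNS (S : Set ℤ) : Prop := 2 * (genus S : ℤ) = frob S + 1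

/-- Pseudo-symmetric: `2 g(S) = F(S) + 2`. -/
def PseudoSymmetric (S : Set ℤ) : Prop := 2 * (genus S : ℤ) = frob S + 2

/-- The set of minimal generators of `S`: nonzero elements not expressible as the
sum of two nonzero elements of `S`. -/
def minGens (S : Set ℤ) : Set ℤ :=
  {x ∈ S | x ≠ 0 ∧ ∀ a ∈ S, ∀ b ∈ S, a ≠ 0 → b ≠ 0 → x ≠ a + b}

/-- The embedding dimension: the number of minimal generators. -/
noncomputable def embdim (S : Set ℤ) : ℕ := (minGens S).ncard

/-- The gluing `⟨x S₁, y S₂⟩` of two numerical semigroups. -/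
def glue (x y : ℤ) (S₁ S₂ : Set ℤ) : Set ℤ :=
  {z : ℤ | ∃ a ∈ S₁, ∃ b ∈ S₂, z = x * a + y * b}

private lemma pairing_of_sym (T : Set ℤ) (Fd : ℤ)
    (hTadd : ∀ a ∈ T, ∀ b ∈ T, a + b ∈ T)
    (hFd : Fd ∉ T) (hFd' : ∀ z : ℤ, Fd < z → z ∈ T)
    (hfin : {z : ℤ | 0 ≤ z ∧ z ∉ T}.Finite)
    (heq : 2 * (({z : ℤ | 0 ≤ z ∧ z ∉ T}).ncard : ℤ) = Fd + 1) :
    ∀ z : ℤ, 0 ≤ z → z ∉ T → Fd - z ∈ T := by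
  by_contra hcon
  push_neg at hcon
  obtain ⟨a, ha0, haT, haF⟩ := hcon
  have haFd : a ≤ Fd := by by_contra h; exact haT (hFd' a (by omega))
  set A := {z : ℤ | 0 ≤ z ∧ z ∉ T} with hA
  set B := {z : ℤ | 0 ≤ z ∧ z ≤ Fd ∧ z ∈ T} with hB
  have hBfin : B.Finite := (Set.finite_Icc 0 Fd).subset (fun z hz => ⟨hz.1, hz.2.1⟩)
  have hAsub : A ⊆ Set.Icc 0 Fd := fun z hz =>
    ⟨hz.1, by by_contra h; exact hz.2 (hFd' z (by omega))⟩
  have hunion : Set.Icc 0 Fd = A ∪ B := by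
    ext z; constructor
    · rintro ⟨hz1, hz2⟩
      by_cases hzT : z ∈ T
      · exact Or.inr ⟨hz1, hz2, hzT⟩
      · exact Or.inl ⟨hz1, hzT⟩
    · rintro (hz | ⟨hz1, hz2, _⟩)
      · exact hAsub hz
      · exact ⟨hz1, hz2⟩
  have hdisj : Disjoint A B := by
    rw [Set.disjoint_left]; rintro z ⟨_, h2⟩ ⟨_, _, h3⟩; exact h2 h3
  have hcard1 : A.ncard + B.ncard = (Fd + 1).toNat := by
    rw [← Set.ncard_union_eq hdisj hfin hBfin, ← hunion, ← Finset.coe_Icc,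
      Set.ncard_coe_finset, Int.card_Icc]
    omega
  set C := (fun z => Fd - z) '' B with hC
  have hinj : Set.InjOn (fun z => Fd - z) B := fun x _ y _ h => by dsimp at h; omega
  have hCsub : C ⊆ A := by
    rintro _ ⟨z, ⟨hz1, hz2, hz3⟩, rfl⟩
    refine ⟨by dsimp; omega, fun hFT => hFd ?_⟩
    have := hTadd z hz3 (Fd - z) hFT
    simpa using this
  have haC : a ∉ C := by
    rintro ⟨z, ⟨hz1, hz2, hz3⟩, hz⟩
    dsimp at hz
    have hza : z = Fd - a := by omega
    exact haF (hza ▸ hz3)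
  have hCA : insert a C ⊆ A := Set.insert_subset ⟨ha0, haT⟩ hCsub
  have hCfin : C.Finite := hBfin.image _
  have hle : C.ncard + 1 ≤ A.ncard := by
    have h1 : (insert a C).ncard = C.ncard + 1 := Set.ncard_insert_of_notMem haC hCfin
    have h2 := Set.ncard_le_ncard hCA hfin
    omega
  have hCB : C.ncard = B.ncard := Set.ncard_image_of_injOn hinj
  omega

private lemma nat_case (S : Set ℤ) (hS : IsNumericalSemigroup S) (h1 : (1:ℤ) ∈ S) :
    (AlmostSymmetric S ∧ (embdim S : ℤ) = mult S) ∧ SymmetricNS (dual S) := by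
  obtain ⟨hpos, h0, hadd, hfin⟩ := hS
  have hSnat : S = {z : ℤ | 0 ≤ z} := by
    ext z
    constructor
    · exact fun h => hpos z h
    · exact fun hz => Int.le_induction h0 (fun n _ hn => hadd n hn 1 h1) z hz
  have hgaps : {z : ℤ | 0 ≤ z ∧ z ∉ S} = ∅ := by
    ext z; simp [hSnat]
  have hg : genus S = 0 := by rw [genus, hgaps]; exact Set.ncard_empty _
  have hns : {z : ℤ | z ∉ S} = {z : ℤ | z < 0} := by
    ext z; simp only [Set.mem_setOf_eq, hSnat]; omega
  have hf : frob S = -1 := by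
    rw [frob, hns]
    apply le_antisymm
    · exact csSup_le ⟨-1, by norm_num⟩ (fun z (hz : z < 0) => by omega)
    · exact le_csSup ⟨-1, fun z (hz : z < 0) => by omega⟩ (by norm_num)
  have hPF : PF S = {-1} := by
    ext x
    simp only [PF, Set.mem_setOf_eq, hSnat, Set.mem_singleton_iff]
    constructor
    · rintro ⟨hx, hall⟩
      have := hall 1 (by norm_num) (by norm_num)
      omega
    · rintro rfl
      exact ⟨by norm_num, fun h hh hne => by omega⟩
  have ht : typ S = 1 := by rw [typ, hPF]; exact Set.ncard_singleton _
  have hm : mult S = 1 := by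
    rw [mult]
    have : {z : ℤ | z ∈ S ∧ z ≠ 0} = {z : ℤ | 1 ≤ z} := by
      ext z; simp only [Set.mem_setOf_eq, hSnat]; omega
    rw [this]
    apply le_antisymm
    · exact csInf_le ⟨1, fun z (hz : 1 ≤ z) => hz⟩ (by norm_num)
    · exact le_csInf ⟨1, by norm_num⟩ (fun z (hz : 1 ≤ z) => hz)
  have hmg : minGens S = {1} := by
    ext x
    simp only [minGens, Set.mem_setOf_eq, hSnat, Set.mem_singleton_iff]
    constructor
    · rintro ⟨hx0, hxne, hnsum⟩
      by_contra hne1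
      exact hnsum 1 (by omega) (x - 1) (by omega) (by omega) (by omega) (by omega)
    · rintro rfl
      exact ⟨by norm_num, by norm_num, fun a ha b hb ha0 hb0 => by omega⟩
  have he : embdim S = 1 := by rw [embdim, hmg]; exact Set.ncard_singleton _
  have hd : dual S = S := by
    ext z
    simp only [dual, Set.mem_setOf_eq, hSnat]
    constructor
    · intro h
      have := h 1 (by norm_num) (by norm_num)
      omega
    · intro hz mm hmm hm0
      constructor <;> omega
  refine ⟨⟨?_, ?_⟩, ?_⟩
  · show 2 * (genus S : ℤ) = frob S + (typ S : ℤ)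
    rw [hg, hf, ht]; norm_num
  · rw [he, hm]; norm_num
  · show 2 * (genus (dual S) : ℤ) = frob (dual S) + 1
    rw [hd, hg, hf]; norm_num

private lemma main_case (S : Set ℤ) (hS : IsNumericalSemigroup S) (h1 : (1:ℤ) ∉ S) :
    (AlmostSymmetric S ∧ (embdim S : ℤ) = mult S) ↔ SymmetricNS (dual S) := by
  obtain ⟨hpos, h0, hadd, hfin⟩ := hS
  -- frob basics
  have hbdd : BddAbove {z : ℤ | z ∉ S} := by
    obtain ⟨c, hc⟩ := hfin.bddAbove
    refine ⟨max c 0, fun z hz => ?_⟩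
    by_cases h : 0 ≤ z
    · exact le_trans (hc ⟨h, hz⟩) (le_max_left _ _)
    · exact le_trans (by omega) (le_max_right c 0)
  have hub : ∀ z : ℤ, z ∉ S → z ≤ frob S := fun z hz => le_csSup hbdd hz
  have hgtF : ∀ z : ℤ, frob S < z → z ∈ S := fun z hz => by
    by_contra h; exact absurd (hub z h) (by omega)
  have hF1 : 1 ≤ frob S := hub 1 h1
  have hFS : frob S ∉ S := Int.csSup_mem ⟨1, h1⟩ hbdd
  -- mult basics
  have hbddB : BddBelow {z : ℤ | z ∈ S ∧ z ≠ 0} := ⟨0, fun z hz => hpos z hz.1⟩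
  have hmmem : mult S ∈ S ∧ mult S ≠ 0 :=
    Int.csInf_mem (s := {z : ℤ | z ∈ S ∧ z ≠ 0}) ⟨frob S + 1, ⟨hgtF _ (by omega), by omega⟩⟩ hbddB
  have hmle : ∀ z ∈ S, z ≠ 0 → mult S ≤ z := fun z hz hz0 => csInf_le hbddB ⟨hz, hz0⟩
  have hm2 : 2 ≤ mult S := by
    have hp := hpos _ hmmem.1
    have hne := hmmem.2
    by_contra hlt
    push_neg at hlt
    have hm1 : mult S = 1 := by omega
    exact h1 (hm1 ▸ hmmem.1)
  have hmulN : ∀ n : ℕ, (n : ℤ) * mult S ∈ S := by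
    intro n
    induction n with
    | zero => simpa using h0
    | succ n ih =>
      have h2 := hadd _ ih _ hmmem.1
      have h3 : ((n + 1 : ℕ) : ℤ) * mult S = (n : ℤ) * mult S + mult S := by push_cast; ring
      rwa [h3]
  have hmul : ∀ k : ℤ, 0 ≤ k → k * mult S ∈ S := fun k hk => by
    have := hmulN k.toNat
    rwa [Int.toNat_of_nonneg hk] at this
  -- dual basics
  have hSD : S ⊆ dual S := by
    intro s hs h hh hh0
    refine ⟨hadd s hs h hh, ?_⟩
    have := hpos s hs; have := hpos h hh
    omega
  have hDpos : ∀ z ∈ dual S, 0 ≤ z := fun z hz => by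
    obtain ⟨ha, hb⟩ := hz _ hmmem.1 hmmem.2
    have := hmle _ ha hb
    omega
  have hDadd : ∀ a ∈ dual S, ∀ b ∈ dual S, a + b ∈ dual S := by
    intro a ha b hb h hh hh0
    obtain ⟨hb1, hb2⟩ := hb h hh hh0
    have := ha (b + h) hb1 hb2
    rw [add_assoc]
    exact this
  have hDfin : {z : ℤ | 0 ≤ z ∧ z ∉ dual S}.Finite :=
    hfin.subset (fun z hz => ⟨hz.1, fun hzS => hz.2 (hSD hzS)⟩)
  -- frob of dual
  have hFmD : frob S - mult S ∉ dual S := by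
    intro h
    have h2 := (h _ hmmem.1 hmmem.2).1
    have h3 : frob S - mult S + mult S = frob S := by ring
    rw [h3] at h2
    exact hFS h2
  have hgtFD : ∀ z : ℤ, frob S - mult S < z → z ∈ dual S := by
    intro z hz h hh hh0
    have hhm := hmle h hh hh0
    have hzS : z + h ∈ S := hgtF _ (by omega)
    exact ⟨hzS, by omega⟩
  have hfrobD : frob (dual S) = frob S - mult S := by
    show sSup {z : ℤ | z ∉ dual S} = frob S - mult S
    apply le_antisymm
    · refine csSup_le ⟨frob S - mult S, hFmD⟩ (fun z hz => ?_)
      by_contra hlt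
      exact hz (hgtFD z (by omega))
    · exact le_csSup ⟨frob S - mult S, fun z hz => by
        by_contra hlt; exact hz (hgtFD z (by omega))⟩ hFmD
  -- PF S = dual S \ S
  have hPFeq : PF S = dual S \ S := by
    ext x
    constructor
    · rintro ⟨hxS, hall⟩
      refine ⟨fun h hh hh0 => ⟨hall h hh hh0, fun hx0 => ?_⟩, hxS⟩
      have hxm := hall _ hmmem.1 hmmem.2
      have h1' : -(mult S) ≤ x := by have := hpos _ hxm; omega
      have hhm := hmle h hh hh0
      have hxe : x = -(mult S) := by omega
      have hFm : frob S + mult S ∈ S := hgtF _ (by omega)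
      have h2 := hall (frob S + mult S) hFm (by omega)
      rw [hxe] at h2
      have h3 : -(mult S) + (frob S + mult S) = frob S := by ring
      rw [h3] at h2
      exact hFS h2
    · rintro ⟨hxD, hxS⟩
      exact ⟨hxS, fun h hh hh0 => (hxD h hh hh0).1⟩
  -- genus split
  have hPsub : dual S \ S ⊆ {z : ℤ | 0 ≤ z ∧ z ∉ S} := fun z hz => ⟨hDpos z hz.1, hz.2⟩
  have hPfin : (dual S \ S).Finite := hfin.subset hPsub
  have hsplit : {z : ℤ | 0 ≤ z ∧ z ∉ S} = {z : ℤ | 0 ≤ z ∧ z ∉ dual S} ∪ (dual S \ S) := by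
    ext z
    constructor
    · rintro ⟨hz0, hzS⟩
      by_cases hzD : z ∈ dual S
      · exact Or.inr ⟨hzD, hzS⟩
      · exact Or.inl ⟨hz0, hzD⟩
    · rintro (⟨hz0, hzD⟩ | ⟨hzD, hzS⟩)
      · exact ⟨hz0, fun h => hzD (hSD h)⟩
      · exact ⟨hDpos z hzD, hzS⟩
  have hdisj2 : Disjoint {z : ℤ | 0 ≤ z ∧ z ∉ dual S} (dual S \ S) := by
    rw [Set.disjoint_left]; rintro z ⟨_, h2⟩ ⟨h3, _⟩; exact h2 h3
  have hgsum : genus S = genus (dual S) + (dual S \ S).ncard := by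
    rw [genus, genus, hsplit, Set.ncard_union_eq hdisj2 hDfin hPfin]
  have htyp : typ S = (dual S \ S).ncard := by rw [typ, hPFeq]
  -- step lemma for residues
  have hstep : ∀ x y : ℤ, x % mult S = y % mult S → x < y → y - x ∈ S ∧ y - x ≠ 0 := by
    intro x y hxy hlt
    have h0' : (y - x) % mult S = 0 := by rw [Int.sub_emod, hxy, sub_self, Int.zero_emod]
    obtain ⟨k, hk⟩ := Int.dvd_of_emod_eq_zero h0'
    have hk1 : 1 ≤ k := by by_contra hc; push_neg at hc; nlinarith
    refine ⟨?_, by omega⟩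
    rw [hk, mul_comm]
    exact hmul k (by omega)
  -- the minimal element of S in each residue class
  set w : ℤ → ℤ := fun r => sInf {s : ℤ | s ∈ S ∧ s % mult S = r} with hwdef
  have hw : ∀ r : ℤ, 1 ≤ r → r < mult S →
      w r ∈ S ∧ w r % mult S = r ∧ (∀ s ∈ S, s % mult S = r → w r ≤ s) ∧
      w r ≠ 0 ∧ w r - mult S ∉ S ∧ (w r - mult S) % mult S = r := by
    intro r hr1 hr2
    have hne : (r + mult S * (frob S + 1)) ∈ {s : ℤ | s ∈ S ∧ s % mult S = r} := by
      constructor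
      · apply hgtF
        have hq : 2 * (frob S + 1) ≤ mult S * (frob S + 1) := by nlinarith
        omega
      · rw [Int.add_mul_emod_self_left, Int.emod_eq_of_lt (by omega) hr2]
    have hbddB' : BddBelow {s : ℤ | s ∈ S ∧ s % mult S = r} := ⟨0, fun z hz => hpos z hz.1⟩
    have hmem := Int.csInf_mem ⟨_, hne⟩ hbddB'
    have hmin : ∀ s ∈ S, s % mult S = r → w r ≤ s := fun s hs hsr => csInf_le hbddB' ⟨hs, hsr⟩
    have hwr : w r % mult S = r := hmem.2
    have hwne : w r ≠ 0 := by
      intro h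
      rw [h, Int.zero_emod] at hwr
      omega
    have hsubmod : (w r - mult S) % mult S = r := by
      rw [Int.sub_emod, Int.emod_self, sub_zero, Int.emod_emod_of_dvd _ dvd_rfl, hwr]
    have hwmS : w r - mult S ∉ S := by
      intro hc
      have := hmin _ hc hsubmod
      omega
    exact ⟨hmem.1, hwr, hmin, hwne, hwmS, hsubmod⟩
  have hIcoN : (Set.Ico (1:ℤ) (mult S)).ncard = (mult S - 1).toNat := by
    rw [← Finset.coe_Ico, Set.ncard_coe_finset, Int.card_Ico]
  -- residues of elements of dual \ S
  have hP0 : ∀ f ∈ dual S \ S, 1 ≤ f % mult S ∧ f % mult S < mult S := by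
    rintro f ⟨hfD, hfS⟩
    have hf0 : 0 ≤ f := hDpos f hfD
    have h1' : 0 ≤ f % mult S := Int.emod_nonneg f (by omega)
    have h2' : f % mult S < mult S := Int.emod_lt_of_pos f (by omega)
    refine ⟨?_, h2'⟩
    by_contra hc
    have hfm : f % mult S = 0 := by omega
    obtain ⟨k, hk⟩ := Int.dvd_of_emod_eq_zero hfm
    rcases eq_or_lt_of_le hf0 with h | h
    · exact hfS (h ▸ h0)
    · have hk1 : 1 ≤ k := by by_contra hc2; push_neg at hc2; nlinarith
      apply hfS
      rw [hk, mul_comm]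
      exact hmul k (by omega)
  have hPinj : Set.InjOn (· % mult S) (dual S \ S) := by
    intro x hx y hy hxy
    by_contra hne
    rcases lt_or_gt_of_ne hne with hlt | hlt
    · obtain ⟨hd, hne'⟩ := hstep x y hxy hlt
      have h2 := (hx.1 (y - x) hd hne').1
      have h3 : x + (y - x) = y := by ring
      rw [h3] at h2
      exact hy.2 h2
    · obtain ⟨hd, hne'⟩ := hstep y x hxy.symm hlt
      have h2 := (hy.1 (x - y) hd hne').1
      have h3 : y + (x - y) = x := by ring
      rw [h3] at h2
      exact hx.2 h2
  -- MED → type count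
  have hmed_t : (∀ x ∈ S, x ≠ 0 → x - mult S ∈ dual S) →
      ((dual S \ S).ncard : ℤ) = mult S - 1 := by
    intro hmed
    have himg : (· % mult S) '' (dual S \ S) = Set.Ico 1 (mult S) := by
      apply Set.Subset.antisymm
      · rintro _ ⟨f, hf, rfl⟩
        exact Set.mem_Ico.2 (hP0 f hf)
      · rintro r hr
        rw [Set.mem_Ico] at hr
        obtain ⟨hwS, hwr, hwmin, hwne, hwmS, hsubr⟩ := hw r hr.1 hr.2
        exact ⟨w r - mult S, ⟨hmed _ hwS hwne, hwmS⟩, hsubr⟩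
    have h2 := Set.ncard_image_of_injOn hPinj
    rw [himg, hIcoN] at h2
    omega
  -- classification of minimal generators
  have hgen_char : ∀ x ∈ minGens S, x = mult S ∨ ∃ r ∈ Set.Ico (1:ℤ) (mult S), x = w r := by
    rintro x ⟨hxS, hx0, hxns⟩
    have hx1 : 0 < x := by have := hpos x hxS; omega
    by_cases hr0 : x % mult S = 0
    · left
      obtain ⟨k, hk⟩ := Int.dvd_of_emod_eq_zero hr0
      have hk1 : 1 ≤ k := by by_contra hc; push_neg at hc; nlinarith
      by_contra hxm
      have hk2 : 2 ≤ k := by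
        rcases eq_or_lt_of_le hk1 with h | h
        · exact absurd (by rw [hk, ← h, mul_one]) hxm
        · omega
      exact hxns _ hmmem.1 (mult S * (k - 1))
        (by rw [mul_comm]; exact hmul _ (by omega)) hmmem.2 (by nlinarith)
        (by rw [hk]; ring)
    · right
      have hr1 : 1 ≤ x % mult S := by
        have := Int.emod_nonneg x (show mult S ≠ 0 by omega); omega
      have hr2 : x % mult S < mult S := Int.emod_lt_of_pos x (by omega)
      obtain ⟨hwS, hwr, hwmin, hwne, hwmS, hsubr⟩ := hw _ hr1 hr2
      refine ⟨x % mult S, Set.mem_Ico.2 ⟨hr1, hr2⟩, ?_⟩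
      have hle' : w (x % mult S) ≤ x := hwmin x hxS rfl
      rcases eq_or_lt_of_le hle' with h | h
      · exact h.symm
      · exfalso
        obtain ⟨hd, hdne⟩ := hstep _ x (by rw [hwr]) h
        exact hxns _ hwS _ hd hwne hdne (by ring)
  -- MED → embdim = mult
  have hmed_e : (∀ x ∈ S, x ≠ 0 → x - mult S ∈ dual S) → (embdim S : ℤ) = mult S := by
    intro hmed
    have hwgen : ∀ r ∈ Set.Ico (1:ℤ) (mult S), w r ∈ minGens S := by
      intro r hr
      rw [Set.mem_Ico] at hr
      obtain ⟨hwS, hwr, hwmin, hwne, hwmS, hsubr⟩ := hw r hr.1 hr.2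
      refine ⟨hwS, hwne, ?_⟩
      intro a ha b hb ha0 hb0 heq'
      have h2 := ((hmed a ha ha0) b hb hb0).1
      have h3 : a - mult S + b = w r - mult S := by omega
      rw [h3] at h2
      exact hwmS h2
    have hmemb : mult S ∈ minGens S := by
      refine ⟨hmmem.1, hmmem.2, ?_⟩
      intro a ha b hb ha0 hb0 heq'
      have := hmle a ha ha0; have := hmle b hb hb0
      omega
    have hminG : minGens S = insert (mult S) (w '' Set.Ico 1 (mult S)) := by
      apply Set.Subset.antisymm
      · intro x hx
        rcases hgen_char x hx with h | ⟨r, hr, h⟩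
        · exact h ▸ Set.mem_insert _ _
        · exact Set.mem_insert_of_mem _ ⟨r, hr, h.symm⟩
      · intro x hx
        rcases Set.mem_insert_iff.1 hx with rfl | ⟨r, hr, rfl⟩
        · exact hmemb
        · exact hwgen r hr
    have hwinj : Set.InjOn w (Set.Ico (1:ℤ) (mult S)) := by
      intro r1 h1' r2 h2' heq'
      rw [Set.mem_Ico] at h1' h2'
      have e1 := (hw r1 h1'.1 h1'.2).2.1
      have e2 := (hw r2 h2'.1 h2'.2).2.1
      rw [← e1, ← e2, heq']
    have hmnot : mult S ∉ w '' Set.Ico (1:ℤ) (mult S) := by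
      rintro ⟨r, hr, hrm⟩
      rw [Set.mem_Ico] at hr
      have h2 := (hw r hr.1 hr.2).2.1
      rw [hrm, Int.emod_self] at h2
      omega
    have hfinimg : (w '' Set.Ico (1:ℤ) (mult S)).Finite := (Set.finite_Ico _ _).image _
    have hcard : embdim S = (mult S - 1).toNat + 1 := by
      rw [embdim, hminG, Set.ncard_insert_of_notMem hmnot hfinimg,
        Set.ncard_image_of_injOn hwinj, hIcoN]
    omega
  -- embdim = mult → MED
  have he_med : (embdim S : ℤ) = mult S → ∀ x ∈ S, x ≠ 0 → x - mult S ∈ dual S := by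
    intro hedim
    by_contra hc
    push_neg at hc
    obtain ⟨x, hxS, hx0, hxD⟩ := hc
    have hex : ∃ h ∈ S, h ≠ 0 ∧ x + h - mult S ∉ S := by
      by_contra hc2
      push_neg at hc2
      apply hxD
      intro h hh hh0
      have hin := hc2 h hh hh0
      have hx' : x - mult S + h = x + h - mult S := by ring
      have h2 := hmle x hxS hx0
      have h3 := hmle h hh hh0
      rw [hx']
      exact ⟨hin, by omega⟩
    obtain ⟨h, hh, hh0, hu⟩ := hex
    have huS : x + h ∈ S := hadd x hxS h hh
    have hum : mult S ≤ x := hmle x hxS hx0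
    have huh : mult S ≤ h := hmle h hh hh0
    have hr0 : (x + h) % mult S ≠ 0 := by
      intro hc3
      obtain ⟨k, hk⟩ := Int.dvd_of_emod_eq_zero hc3
      have hk2 : 2 ≤ k := by by_contra hc4; push_neg at hc4; nlinarith
      apply hu
      have h5 : x + h - mult S = mult S * (k - 1) := by rw [hk]; ring
      rw [h5, mul_comm]
      exact hmul _ (by omega)
    have hr1 : 1 ≤ (x + h) % mult S := by
      have := Int.emod_nonneg (x + h) (show mult S ≠ 0 by omega); omega
    have hr2 : (x + h) % mult S < mult S := Int.emod_lt_of_pos (x + h) (by omega)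
    obtain ⟨hwS, hwr, hwmin, hwne, hwmS, hsubr⟩ := hw _ hr1 hr2
    have hux : x + h = w ((x + h) % mult S) := by
      have hle' := hwmin _ huS rfl
      rcases eq_or_lt_of_le hle' with hh' | hh'
      · exact hh'.symm
      · exfalso
        obtain ⟨hd, hdne⟩ := hstep _ (x + h) (by rw [hwr]) hh'
        obtain ⟨k, hk⟩ := Int.dvd_of_emod_eq_zero (show (x + h - w ((x + h) % mult S)) % mult S = 0 by
          rw [Int.sub_emod, hwr, sub_self, Int.zero_emod])
        have hk1 : 1 ≤ k := by by_contra hc5; push_neg at hc5; nlinarith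
        apply hu
        have h6 : x + h - mult S = w ((x + h) % mult S) + mult S * (k - 1) := by
          linear_combination hk
        rw [h6]
        exact hadd _ hwS _ (by rw [mul_comm]; exact hmul _ (by omega))
    -- now w r is not a minimal generator
    have hsub2 : minGens S ⊆
        insert (mult S) (w '' (Set.Ico (1:ℤ) (mult S) \ {(x + h) % mult S})) := by
      intro y hy
      rcases hgen_char y hy with hym | ⟨r', hr', hyw⟩
      · exact hym ▸ Set.mem_insert _ _
      · apply Set.mem_insert_of_mem
        refine ⟨r', ⟨hr', ?_⟩, hyw.symm⟩
        intro hrr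
        rw [Set.mem_singleton_iff] at hrr
        subst hrr
        obtain ⟨hyS, hy0, hyns⟩ := hy
        exact hyns x hxS h hh hx0 hh0 (by rw [hyw, ← hux])
    have hfinI : (Set.Ico (1:ℤ) (mult S) \ {(x + h) % mult S}).Finite :=
      (Set.finite_Ico _ _).diff
    have hfin2 : (insert (mult S) (w '' (Set.Ico (1:ℤ) (mult S) \ {(x + h) % mult S}))).Finite :=
      (hfinI.image _).insert _
    have hcount := Set.ncard_le_ncard hsub2 hfin2
    have h3 := Set.ncard_insert_le (mult S) (w '' (Set.Ico (1:ℤ) (mult S) \ {(x + h) % mult S}))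
    have h4 := Set.ncard_image_le (f := w) hfinI
    have h5 : (Set.Ico (1:ℤ) (mult S) \ {(x + h) % mult S}).ncard
        = (Set.Ico (1:ℤ) (mult S)).ncard - 1 :=
      Set.ncard_diff_singleton_of_mem (Set.mem_Ico.2 ⟨hr1, hr2⟩)
    rw [hIcoN] at h5
    rw [embdim] at hedim
    omega
  -- final assembly
  constructor
  · rintro ⟨hAS, hED⟩
    have hAS' : 2 * (genus S : ℤ) = frob S + (typ S : ℤ) := hAS
    have hmed := he_med hED
    have ht0 := hmed_t hmed
    show 2 * (genus (dual S) : ℤ) = frob (dual S) + 1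
    rw [hfrobD]
    rw [htyp] at hAS'
    omega
  · intro hSym
    have hSym' : 2 * (genus (dual S) : ℤ) = frob (dual S) + 1 := hSym
    rw [hfrobD] at hSym'
    have hpair := pairing_of_sym (dual S) (frob S - mult S) hDadd hFmD hgtFD hDfin hSym'
    have hmed : ∀ x ∈ S, x ≠ 0 → x - mult S ∈ dual S := by
      intro x hxS hx0
      by_contra hxD
      have hx0' : 0 ≤ x - mult S := by have := hmle x hxS hx0; omega
      have hFx := hpair _ hx0' hxD
      have h2 := (hFx x hxS hx0).1
      have h3 : frob S - mult S - (x - mult S) + x = frob S := by ring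
      rw [h3] at h2
      exact hFS h2
    have ht0 := hmed_t hmed
    refine ⟨?_, hmed_e hmed⟩
    show 2 * (genus S : ℤ) = frob S + (typ S : ℤ)
    rw [htyp]
    omega

theorem stmt11 (S : Set ℤ) (hS : IsNumericalSemigroup S) :
    (AlmostSymmetric S ∧ (embdim S : ℤ) = mult S) ↔ SymmetricNS (dual S) := by
  by_cases h1 : (1:ℤ) ∈ S
  · have h := nat_case S hS h1
    exact ⟨fun _ => h.2, fun _ => h.1⟩
  · exact main_case S hS h1
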